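/- Let R be a ring, let M be a Noetherian R-module, let F, G : ModuleCat R ⥤ ModuleCat R be additive functors such that F preserves epimorphisms, and let α : F ⟶ G be a natural transformation. Then there exists a submodule N of M such that the component of α at N (regarded as an object of ModuleCat R) is zero, and every submodule N' of M at which the component of α is zero satisfies N' ≤ N. -/

import Mathlib

open CategoryTheory Limits

universe u

lemma ann_bot (R : Type u) [Ring R] (M : Type u) [AddCommGroup M] [Module R M]
    (F G : ModuleCat.{u} R ⥤ ModuleCat.{u} R) [F.Additive] [G.Additive] (α : F ⟶ G) :
    α.app (ModuleCat.of R (⊥ : Submodule R M)) = 0 := by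
  have h : (𝟙 (ModuleCat.of R (⊥ : Submodule R M))) = 0 := by
    ext x
  calc α.app _ = F.map (𝟙 _) ≫ α.app _ := by simp
    _ = 0 := by rw [h, F.map_zero, zero_comp]

lemma ann_sup (R : Type u) [Ring R] (M : Type u) [AddCommGroup M] [Module R M]
    (F G : ModuleCat.{u} R ⥤ ModuleCat.{u} R) [F.Additive] [G.Additive]
    [F.PreservesEpimorphisms] (α : F ⟶ G) (A B : Submodule R M)
    (hA : α.app (ModuleCat.of R A) = 0) (hB : α.app (ModuleCat.of R B) = 0) :
    α.app (ModuleCat.of R ↥(A ⊔ B)) = 0 := by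
  set Q := ModuleCat.of R (↥A × ↥B)
  set i1 : ModuleCat.of R A ⟶ Q := ModuleCat.ofHom (LinearMap.inl R ↥A ↥B)
  set i2 : ModuleCat.of R B ⟶ Q := ModuleCat.ofHom (LinearMap.inr R ↥A ↥B)
  set p1 : Q ⟶ ModuleCat.of R A := ModuleCat.ofHom (LinearMap.fst R ↥A ↥B)
  set p2 : Q ⟶ ModuleCat.of R B := ModuleCat.ofHom (LinearMap.snd R ↥A ↥B)
  have total : p1 ≫ i1 + p2 ≫ i2 = 𝟙 Q := by
    ext1; apply LinearMap.ext; intro x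
    show ((x.1, (0 : ↥B)) + ((0 : ↥A), x.2) : ↥A × ↥B) = x
    simp
  have h1 : F.map i1 ≫ α.app Q = 0 := by rw [α.naturality, hA, zero_comp]
  have h2 : F.map i2 ≫ α.app Q = 0 := by rw [α.naturality, hB, zero_comp]
  have hQ : α.app Q = 0 := by
    calc α.app Q = F.map (𝟙 Q) ≫ α.app Q := by simp
      _ = F.map (p1 ≫ i1 + p2 ≫ i2) ≫ α.app Q := by rw [total]
      _ = F.map p1 ≫ (F.map i1 ≫ α.app Q) + F.map p2 ≫ (F.map i2 ≫ α.app Q) := by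
          rw [F.map_add, F.map_comp, F.map_comp, Preadditive.add_comp,
            Category.assoc, Category.assoc]
      _ = 0 := by rw [h1, h2, comp_zero, comp_zero, add_zero]
  set π : Q ⟶ ModuleCat.of R ↥(A ⊔ B) := ModuleCat.ofHom
    ((Submodule.inclusion le_sup_left).comp (LinearMap.fst R ↥A ↥B) +
     (Submodule.inclusion le_sup_right).comp (LinearMap.snd R ↥A ↥B))
  have hsurj : Function.Surjective π := by
    rintro ⟨x, hx⟩
    rcases Submodule.mem_sup.mp hx with ⟨a, ha, b, hb, rfl⟩
    exact ⟨(⟨a, ha⟩, ⟨b, hb⟩), Subtype.ext rfl⟩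
  haveI : Epi π := (ModuleCat.epi_iff_surjective π).mpr hsurj
  haveI : Epi (F.map π) := F.map_epi π
  have := α.naturality π
  rw [hQ, zero_comp] at this
  exact zero_of_epi_comp (F.map π) this

theorem exists_maximal_annihilated_submodule (R : Type u) [Ring R]
    (M : Type u) [AddCommGroup M] [Module R M] [IsNoetherian R M]
    (F G : ModuleCat.{u} R ⥤ ModuleCat.{u} R) [F.Additive] [G.Additive]
    [F.PreservesEpimorphisms] (α : F ⟶ G) :
    ∃ N : Submodule R M, α.app (ModuleCat.of R N) = 0 ∧
      ∀ N' : Submodule R M, α.app (ModuleCat.of R N') = 0 → N' ≤ N := by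
  set S : Set (Submodule R M) := {N | α.app (ModuleCat.of R N) = 0}
  have hS : S.Nonempty := ⟨⊥, ann_bot R M F G α⟩
  obtain ⟨N, hN, hmax⟩ := (wellFounded_gt (α := Submodule R M)).has_min S hS
  refine ⟨N, hN, fun N' hN' => ?_⟩
  have hsup : N ⊔ N' ∈ S := ann_sup R M F G α N N' hN hN'
  have : ¬ N < N ⊔ N' := hmax _ hsup
  have : N ⊔ N' = N := by
    rcases lt_or_eq_of_le (le_sup_left : N ≤ N ⊔ N') with h | h
    · exact absurd h this
    · exact h.symm
  exact le_trans (le_sup_right : N' ≤ N ⊔ N') this.le
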